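/- Let 0 < H₁ < 1 and α > 0, let B^{H₁} be a fractional Brownian motion with Hurst parameter H₁, and let τ > 0 be a constant such that s^{2H₁} r^{2H₁} − R_{H₁}(s,r)² ≥ τ (s−r)^{2H₁} r^{2H₁} for all 0 ≤ r ≤ s. Then for every n ≥ 1 and all integers i > j ≥ 1, E[K(n^α B^{H₁}_i) K(n^α B^{H₁}_j)] ≤ n^{−3α/2} / (2π √2 τ^{1/4} (i−j)^{H₁/2} j^{3H₁/4} i^{H₁/4}). -/

import Mathlib

open MeasureTheory ProbabilityTheory Real

open NNReal Complex

/-- The standard Gaussian kernel `K(x) = (2π)^{-1/2} e^{-x²/2}`. -/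
noncomputable def K (x : ℝ) : ℝ := (Real.sqrt (2 * Real.pi))⁻¹ * Real.exp (-(x ^ 2) / 2)

/-- Covariance function of fractional Brownian motion with Hurst parameter `H`. -/
noncomputable def RH (H t s : ℝ) : ℝ :=
  (t ^ (2 * H) + s ^ (2 * H) - |t - s| ^ (2 * H)) / 2

/-- `B` is a fractional Brownian motion with Hurst parameter `H` on `(Ω, μ)`:
a centered Gaussian process, starting from `0`, with covariance `R_H`. -/
structure IsFBM {Ω : Type*} [MeasurableSpace Ω] (μ : Measure Ω) (H : ℝ)
    (B : ℝ → Ω → ℝ) : Prop where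
  meas : ∀ t : ℝ, Measurable (B t)
  zero : ∀ᵐ ω ∂μ, B 0 ω = 0
  gaussian : ∀ (n : ℕ) (t : Fin n → ℝ) (c : Fin n → ℝ), (∀ i, 0 ≤ t i) →
    ∃ v : NNReal, μ.map (fun ω => ∑ i, c i * B (t i) ω) = gaussianReal 0 v
  cov : ∀ s t : ℝ, 0 ≤ s → 0 ≤ t → ∫ ω, B s ω * B t ω ∂μ = RH H s t


lemma my_exponent_eq (a b x : ℝ) :
    (-(a:ℂ)) * (x:ℂ)^2 + (b:ℂ)*(x:ℂ) + 0 = ((-(a*x^2) + b*x : ℝ) : ℂ) := by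
  push_cast; ring

lemma my_integrable_quad {a b : ℝ} (ha : 0 < a) :
    Integrable (fun x : ℝ => Real.exp (-(a*x^2) + b*x)) := by
  have h := (integrable_cexp_quadratic (b := (a:ℂ)) (by simpa using ha) (b:ℂ) 0).norm
  refine h.congr (Filter.Eventually.of_forall fun x => ?_)
  show ‖Complex.exp _‖ = _
  rw [my_exponent_eq, ← Complex.ofReal_exp, Complex.norm_real, Real.norm_eq_abs,
    abs_of_pos (Real.exp_pos _)]

lemma my_integral_quad {a b : ℝ} (ha : 0 < a) :
    ∫ x : ℝ, Real.exp (-(a*x^2) + b*x) = Real.sqrt (π/a) * Real.exp (b^2/(4*a)) := by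
  have h := integral_cexp_quadratic (b := (-a:ℂ)) (by simpa using ha) (b:ℂ) 0
  have h2 : ∫ x : ℝ, Complex.exp ((-a:ℂ) * (x:ℂ)^2 + (b:ℂ)*(x:ℂ) + 0)
      = ((∫ x : ℝ, Real.exp (-(a*x^2) + b*x) : ℝ) : ℂ) := by
    rw [show (fun x : ℝ => Complex.exp ((-a:ℂ) * (x:ℂ)^2 + (b:ℂ)*(x:ℂ) + 0))
        = fun x : ℝ => ((Real.exp (-(a*x^2) + b*x) : ℝ) : ℂ) from ?_]
    · exact integral_ofReal
    · funext x
      rw [my_exponent_eq, ← Complex.ofReal_exp]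
  rw [h2] at h
  have h3 : ((π:ℂ) / -(-a:ℂ)) ^ (1/2 : ℂ) = ((Real.sqrt (π/a) : ℝ) : ℂ) := by
    have e1 : ((π:ℂ) / -(-a:ℂ)) = ((π/a : ℝ) : ℂ) := by push_cast; ring
    rw [e1, show ((1:ℂ)/2) = ((1/2:ℝ):ℂ) by norm_num,
      ← Complex.ofReal_cpow (by positivity), Real.sqrt_eq_rpow]
  rw [h3] at h
  have h4 : (0 : ℂ) - (b:ℂ)^2 / (4 * (-a:ℂ)) = ((b^2/(4*a) : ℝ) : ℂ) := by
    push_cast; field_simp; ring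
  rw [h4, ← Complex.ofReal_exp, ← Complex.ofReal_mul] at h
  exact_mod_cast h

lemma my_integrable_cos_quad {a b : ℝ} (ha : 0 < a) :
    Integrable (fun x : ℝ => Real.cos (b*x) * Real.exp (-(a*x^2))) := by
  refine (integrable_exp_neg_mul_sq ha).mono' ?_ (Filter.Eventually.of_forall fun x => ?_)
  · exact ((Real.continuous_cos.comp (continuous_const.mul continuous_id)).mul
      ((continuous_const.mul (continuous_pow 2)).neg.rexp)).aestronglyMeasurable
  · rw [Real.norm_eq_abs, abs_mul, abs_of_pos (Real.exp_pos _), neg_mul]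
    exact mul_le_of_le_one_left (Real.exp_pos _).le (abs_cos_le_one _)

lemma my_integrable_sin_quad {a b : ℝ} (ha : 0 < a) :
    Integrable (fun x : ℝ => Real.sin (b*x) * Real.exp (-(a*x^2))) := by
  refine (integrable_exp_neg_mul_sq ha).mono' ?_ (Filter.Eventually.of_forall fun x => ?_)
  · exact ((Real.continuous_sin.comp (continuous_const.mul continuous_id)).mul
      ((continuous_const.mul (continuous_pow 2)).neg.rexp)).aestronglyMeasurable
  · rw [Real.norm_eq_abs, abs_mul, abs_of_pos (Real.exp_pos _), neg_mul]
    exact mul_le_of_le_one_left (Real.exp_pos _).le (abs_sin_le_one _)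

lemma my_integral_cos {a b : ℝ} (ha : 0 < a) :
    ∫ x : ℝ, Real.cos (b*x) * Real.exp (-(a*x^2))
      = Real.sqrt (π/a) * Real.exp (-(b^2/(4*a))) := by
  have hint : Integrable (fun x : ℝ => Complex.exp ((-a:ℂ)*(x:ℂ)^2 + ((b:ℂ)*Complex.I)*(x:ℂ) + 0)) :=
    integrable_cexp_quadratic (by simpa using ha) _ 0
  have h := integral_cexp_quadratic (b := (-a:ℂ)) (by simpa using ha) ((b:ℂ)*Complex.I) 0
  have hre : ∀ x : ℝ, (Complex.exp ((-a:ℂ)*(x:ℂ)^2 + ((b:ℂ)*Complex.I)*(x:ℂ) + 0)).re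
      = Real.cos (b*x) * Real.exp (-(a*x^2)) := by
    intro x
    have e : (-a:ℂ)*(x:ℂ)^2 + ((b:ℂ)*Complex.I)*(x:ℂ) + 0
        = ((-(a*x^2) : ℝ) : ℂ) + ((b*x : ℝ) : ℂ) * Complex.I := by push_cast; ring
    rw [e, Complex.exp_re]
    simp only [Complex.add_re, Complex.ofReal_re, Complex.mul_I_re, Complex.ofReal_im,
      Complex.add_im, Complex.mul_I_im]
    ring_nf
  have h5 := integral_re hint
  simp only [RCLike.re_to_complex] at h5
  rw [show (∫ x : ℝ, Real.cos (b*x) * Real.exp (-(a*x^2)))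
      = ∫ x : ℝ, (Complex.exp ((-a:ℂ)*(x:ℂ)^2 + ((b:ℂ)*Complex.I)*(x:ℂ) + 0)).re by
    exact (integral_congr_ae (Filter.Eventually.of_forall fun x => (hre x).symm)), h5, h]
  have h3 : ((π:ℂ) / -(-a:ℂ)) ^ (1/2 : ℂ) = ((Real.sqrt (π/a) : ℝ) : ℂ) := by
    have e1 : ((π:ℂ) / -(-a:ℂ)) = ((π/a : ℝ) : ℂ) := by push_cast; ring
    rw [e1, show ((1:ℂ)/2) = ((1/2:ℝ):ℂ) by norm_num,
      ← Complex.ofReal_cpow (by positivity), Real.sqrt_eq_rpow]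
  have h4 : (0:ℂ) - ((b:ℂ)*Complex.I)^2 / (4 * (-a:ℂ)) = ((-(b^2/(4*a)) : ℝ) : ℂ) := by
    rw [mul_pow, Complex.I_sq]
    push_cast
    field_simp
    ring
  rw [h3, h4, ← Complex.ofReal_exp, ← Complex.ofReal_mul, Complex.ofReal_re]

lemma my_integral_sin (a b : ℝ) :
    ∫ x : ℝ, Real.sin (b*x) * Real.exp (-(a*x^2)) = 0 := by
  have h := integral_neg_eq_self (fun x : ℝ => Real.sin (b*x) * Real.exp (-(a*x^2))) volume
  simp only [mul_neg, Real.sin_neg, neg_sq, neg_mul, integral_neg] at h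
  linarith

lemma my_integral_gaussianReal' {v : ℝ≥0} (hv : v ≠ 0) (g : ℝ → ℝ) :
    ∫ x, g x ∂(gaussianReal 0 v) = ∫ x, gaussianPDFReal 0 v x * g x := by
  rw [gaussianReal_of_var_ne_zero 0 hv]
  have hd : gaussianPDF 0 v
      = fun x => (((gaussianPDFReal 0 v x).toNNReal : ℝ≥0) : ENNReal) := by
    funext x
    rw [gaussianPDF_def]
    rfl
  rw [hd, integral_withDensity_eq_integral_smul
    ((measurable_gaussianPDFReal 0 v).real_toNNReal) g]
  congr 1
  funext x
  rw [NNReal.smul_def, Real.coe_toNNReal _ (gaussianPDFReal_nonneg 0 v x), smul_eq_mul]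
lemma my_pdf_eq {v : ℝ≥0} (hv : v ≠ 0) (x : ℝ) :
    gaussianPDFReal 0 v x = (Real.sqrt (2*π*v))⁻¹ * Real.exp (-((2*(v:ℝ))⁻¹ * x^2)) := by
  have hv' : 0 < (v:ℝ) := by positivity
  rw [gaussianPDFReal]
  congr 1
  rw [sub_zero]
  congr 1
  field_simp

lemma my_cos_gaussianReal (v : ℝ≥0) (c : ℝ) :
    ∫ x, Real.cos (c*x) ∂(gaussianReal 0 v) = Real.exp (-(c^2*(v:ℝ))/2) := by
  by_cases hv : v = 0
  · subst hv
    rw [gaussianReal_zero_var, integral_dirac]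
    norm_num
  · have hv' : 0 < (v:ℝ) := by positivity
    have ha : 0 < (2*(v:ℝ))⁻¹ := by positivity
    rw [my_integral_gaussianReal' hv]
    calc ∫ x, gaussianPDFReal 0 v x * Real.cos (c*x)
        = ∫ x, (Real.sqrt (2*π*v))⁻¹ * (Real.cos (c*x) * Real.exp (-((2*(v:ℝ))⁻¹ * x^2))) := by
          congr 1; funext x; rw [my_pdf_eq hv]; ring
      _ = (Real.sqrt (2*π*v))⁻¹ * (Real.sqrt (π/(2*(v:ℝ))⁻¹) * Real.exp (-(c^2/(4*(2*(v:ℝ))⁻¹)))) := by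
          rw [integral_const_mul, my_integral_cos ha]
      _ = Real.exp (-(c^2*(v:ℝ))/2) := by
          rw [show π/(2*(v:ℝ))⁻¹ = 2*π*(v:ℝ) by field_simp]
          rw [show -(c^2/(4*(2*(v:ℝ))⁻¹)) = -(c^2*(v:ℝ))/2 by field_simp; ring]
          rw [inv_mul_cancel_left₀]
          positivity
      
lemma my_integral_sq_exp {b : ℝ} (hb : 0 < b) :
    ∫ x : ℝ, x^2 * Real.exp (-(b*x^2)) = Real.sqrt (π/b) / (2*b) := by
  have h1 : ∫ x : ℝ, x^2 * Real.exp (-(b*x^2))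
      = 2 * ∫ x in Set.Ioi (0:ℝ), x^2 * Real.exp (-(b*x^2)) := by
    rw [← integral_comp_abs (f := fun y => y^2 * Real.exp (-(b*y^2)))]
    congr 1; funext x; rw [_root_.sq_abs]
  have h2 : ∀ x : ℝ, x^2 * Real.exp (-(b*x^2)) = x ^ (2:ℝ) * Real.exp (-b * x ^ (2:ℝ)) := by
    intro x
    rw [show (2:ℝ) = ((2:ℕ):ℝ) by norm_num, Real.rpow_natCast]
    norm_num
  rw [h1]
  rw [show (∫ x in Set.Ioi (0:ℝ), x^2 * Real.exp (-(b*x^2)))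
      = ∫ x in Set.Ioi (0:ℝ), x ^ (2:ℝ) * Real.exp (-b * x ^ (2:ℝ)) by
    congr 1; funext x; exact h2 x]
  rw [integral_rpow_mul_exp_neg_mul_rpow two_pos (by norm_num) hb]
  have e1 : (b:ℝ) ^ (-((2:ℝ)+1)/2) = (Real.sqrt b)⁻¹ * b⁻¹ := by
    rw [show -((2:ℝ)+1)/2 = (-(1/2 : ℝ)) + (-1) by norm_num, Real.rpow_add hb,
      Real.rpow_neg_one, show (-(1/2:ℝ)) = -(1/2:ℝ) from rfl, Real.rpow_neg hb.le,
      ← Real.sqrt_eq_rpow]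
  rw [e1, show ((2:ℝ)+1)/2 = 1/2 + 1 by norm_num, Real.Gamma_add_one (by norm_num),
    Real.Gamma_one_half_eq]
  have e2 : Real.sqrt (π/b) = Real.sqrt π / Real.sqrt b := Real.sqrt_div Real.pi_pos.le b
  have hsb : 0 < Real.sqrt b := Real.sqrt_pos.mpr hb
  rw [e2]
  field_simp

lemma my_integrable_sq_gaussianReal (v : ℝ≥0) :
    Integrable (fun x : ℝ => x^2) (gaussianReal 0 v) := by
  by_cases hv : v = 0
  · subst hv
    rw [gaussianReal_zero_var]
    refine ⟨(measurable_id.pow_const 2).aestronglyMeasurable, ?_⟩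
    rw [HasFiniteIntegral, lintegral_dirac]
    exact ENNReal.coe_lt_top
  · have hv' : 0 < (v:ℝ) := by positivity
    have ha : 0 < (2*(v:ℝ))⁻¹ := by positivity
    rw [gaussianReal_of_var_ne_zero 0 hv]
    rw [integrable_withDensity_iff (measurable_gaussianPDF 0 v)
      (Filter.Eventually.of_forall fun x => ENNReal.ofReal_lt_top)]
    have : (fun x : ℝ => x^2 * (gaussianPDF 0 v x).toReal)
        = fun x : ℝ => (Real.sqrt (2*π*v))⁻¹ * (x ^ (2:ℝ) * Real.exp (-(2*(v:ℝ))⁻¹ * x^2)) := by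
      funext x
      rw [gaussianPDF, ENNReal.toReal_ofReal (gaussianPDFReal_nonneg 0 v x), my_pdf_eq hv]
      rw [show (2:ℝ) = ((2:ℕ):ℝ) by norm_num, Real.rpow_natCast]
      push_cast
      ring_nf
    rw [this]
    exact (integrable_rpow_mul_exp_neg_mul_sq ha (by norm_num)).const_mul _

lemma my_sq_gaussianReal (v : ℝ≥0) :
    ∫ x, x^2 ∂(gaussianReal 0 v) = (v:ℝ) := by
  by_cases hv : v = 0
  · subst hv
    rw [gaussianReal_zero_var, integral_dirac]
    norm_num
  · have hv' : 0 < (v:ℝ) := by positivity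
    have hb : 0 < (2*(v:ℝ))⁻¹ := by positivity
    rw [my_integral_gaussianReal' hv]
    calc ∫ x, gaussianPDFReal 0 v x * x^2
        = ∫ x, (Real.sqrt (2*π*v))⁻¹ * (x^2 * Real.exp (-((2*(v:ℝ))⁻¹ * x^2))) := by
          congr 1; funext x; rw [my_pdf_eq hv]; ring
      _ = (Real.sqrt (2*π*v))⁻¹ * (Real.sqrt (π/(2*(v:ℝ))⁻¹) / (2*(2*(v:ℝ))⁻¹)) := by
          rw [integral_const_mul, my_integral_sq_exp hb]
      _ = (v:ℝ) := by
          rw [show π/(2*(v:ℝ))⁻¹ = 2*π*(v:ℝ) by field_simp]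
          rw [show (2*(2*(v:ℝ))⁻¹) = (v:ℝ)⁻¹ by field_simp]
          have hs : 0 < Real.sqrt (2*π*(v:ℝ)) := Real.sqrt_pos.mpr (by positivity)
          field_simp

lemma my_gauss_integrable {a : ℝ} (ha : 0 < a) :
    Integrable (fun x : ℝ => Real.exp (-(a*x^2))) := by
  simpa [neg_mul] using integrable_exp_neg_mul_sq ha

lemma my_prod_integrable (u w : ℝ) :
    Integrable (fun p : ℝ × ℝ =>
      Real.exp (-((1:ℝ)/2*p.1^2)) * Real.exp (-((1:ℝ)/2*p.2^2)) * Real.cos (p.1*u + p.2*w))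
      (volume : Measure (ℝ × ℝ)) := by
  have h : (0:ℝ) < 1/2 := by norm_num
  have hg : Integrable (fun p : ℝ × ℝ =>
      Real.exp (-((1:ℝ)/2*p.1^2)) * Real.exp (-((1:ℝ)/2*p.2^2))) (volume : Measure (ℝ × ℝ)) := by
    rw [Measure.volume_eq_prod]
    exact (my_gauss_integrable h).mul_prod (my_gauss_integrable h)
  refine hg.mono' ?_ (Filter.Eventually.of_forall fun p => ?_)
  · apply Continuous.aestronglyMeasurable
    apply Continuous.mul
    apply Continuous.mul
    · exact (((continuous_const.mul (continuous_fst.pow 2))).neg).rexp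
    · exact (((continuous_const.mul (continuous_snd.pow 2))).neg).rexp
    · exact Real.continuous_cos.comp ((continuous_fst.mul continuous_const).add
        (continuous_snd.mul continuous_const))
  · rw [Real.norm_eq_abs, abs_mul, abs_mul, abs_of_pos (Real.exp_pos _),
      abs_of_pos (Real.exp_pos _)]
    have h1 : 0 ≤ Real.exp (-((1:ℝ)/2*p.1^2)) * Real.exp (-((1:ℝ)/2*p.2^2)) := by positivity
    nlinarith [abs_cos_le_one (p.1*u + p.2*w), abs_nonneg (Real.cos (p.1*u + p.2*w)),
      mul_le_of_le_one_right h1 (abs_cos_le_one (p.1*u + p.2*w))]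

lemma my_prod_repr (u w : ℝ) :
    ∫ p : ℝ × ℝ, Real.exp (-((1:ℝ)/2*p.1^2)) * Real.exp (-((1:ℝ)/2*p.2^2))
        * Real.cos (p.1*u + p.2*w)
      = 2*π * (Real.exp (-((1:ℝ)/2*u^2)) * Real.exp (-((1:ℝ)/2*w^2))) := by
  have h : (0:ℝ) < 1/2 := by norm_num
  have hint := my_prod_integrable u w
  rw [Measure.volume_eq_prod] at hint ⊢
  rw [integral_prod _ hint]
  have inner : ∀ t : ℝ, (∫ s : ℝ, Real.exp (-((1:ℝ)/2*t^2)) * Real.exp (-((1:ℝ)/2*s^2))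
      * Real.cos (t*u + s*w))
      = (Real.sqrt (2*π) * Real.exp (-((1:ℝ)/2*w^2))) * (Real.cos (u*t) * Real.exp (-((1:ℝ)/2*t^2))) := by
    intro t
    have e1 : ∀ s : ℝ, Real.exp (-((1:ℝ)/2*t^2)) * Real.exp (-((1:ℝ)/2*s^2)) * Real.cos (t*u + s*w)
        = Real.exp (-((1:ℝ)/2*t^2)) *
          (Real.cos (t*u) * (Real.cos (w*s) * Real.exp (-((1:ℝ)/2*s^2)))
           - Real.sin (t*u) * (Real.sin (w*s) * Real.exp (-((1:ℝ)/2*s^2)))) := by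
      intro s
      rw [Real.cos_add, mul_comm s w]
      ring
    simp_rw [e1]
    rw [integral_const_mul, integral_sub ((my_integrable_cos_quad h).const_mul _)
      ((my_integrable_sin_quad h).const_mul _), integral_const_mul, integral_const_mul,
      my_integral_cos h, my_integral_sin]
    rw [show π/((1:ℝ)/2) = 2*π by ring, show -(w^2/(4*((1:ℝ)/2))) = -((1:ℝ)/2*w^2) by ring,
      mul_comm t u]
    ring
  simp_rw [inner]
  rw [integral_const_mul, my_integral_cos h]
  rw [show π/((1:ℝ)/2) = 2*π by ring, show -(u^2/(4*((1:ℝ)/2))) = -((1:ℝ)/2*u^2) by ring]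
  rw [← mul_assoc, ← mul_assoc, mul_comm _ (Real.sqrt (2*π)), ← mul_assoc,
    Real.mul_self_sqrt (by positivity)]
  ring

lemma my_gauss2 {A Bc C : ℝ} (hC : 0 < C) (hD : 0 < A*C - Bc^2) :
    ∫ p : ℝ × ℝ, Real.exp (-((A*p.1^2 + 2*Bc*p.1*p.2 + C*p.2^2)/2))
      = 2*π / Real.sqrt (A*C - Bc^2) := by
  have hC2 : (0:ℝ) < C/2 := by linarith
  have hA2 : 0 < A - Bc^2/C := by
    rw [sub_pos, div_lt_iff₀ hC]
    nlinarith
  have hA22 : 0 < (A - Bc^2/C)/2 := by linarith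
  have e1 : ∀ t s : ℝ, Real.exp (-((A*t^2 + 2*Bc*t*s + C*s^2)/2))
      = Real.exp (-(A*t^2/2)) * Real.exp (-((C/2)*s^2) + (-(Bc*t))*s) := by
    intro t s
    rw [← Real.exp_add]
    congr 1
    ring
  have inner : ∀ t : ℝ, (∫ s : ℝ, Real.exp (-((A*t^2 + 2*Bc*t*s + C*s^2)/2)))
      = Real.sqrt (π/(C/2)) * Real.exp (-(((A - Bc^2/C)/2)*t^2)) := by
    intro t
    simp_rw [e1 t]
    rw [integral_const_mul, my_integral_quad hC2, ← mul_assoc, mul_comm (Real.exp _),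
      mul_assoc, ← Real.exp_add]
    congr 2
    field_simp
    ring
  have hmeas : AEStronglyMeasurable
      (fun p : ℝ × ℝ => Real.exp (-((A*p.1^2 + 2*Bc*p.1*p.2 + C*p.2^2)/2)))
      ((volume : Measure ℝ).prod (volume : Measure ℝ)) := by
    apply Continuous.aestronglyMeasurable
    apply Real.continuous_exp.comp
    apply Continuous.neg
    apply Continuous.div_const
    apply Continuous.add
    apply Continuous.add
    · exact continuous_const.mul (continuous_fst.pow 2)
    · exact (continuous_const.mul continuous_fst).mul continuous_snd
    · exact continuous_const.mul (continuous_snd.pow 2)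
  have hint : Integrable (fun p : ℝ × ℝ => Real.exp (-((A*p.1^2 + 2*Bc*p.1*p.2 + C*p.2^2)/2)))
      ((volume : Measure ℝ).prod (volume : Measure ℝ)) := by
    rw [integrable_prod_iff hmeas]
    constructor
    · refine Filter.Eventually.of_forall fun t => ?_
      simp_rw [e1 t]
      exact (my_integrable_quad hC2).const_mul _
    · have heq : (fun t : ℝ => ∫ s : ℝ, ‖Real.exp (-((A*t^2 + 2*Bc*t*s + C*s^2)/2))‖)
          = fun t : ℝ => Real.sqrt (π/(C/2)) * Real.exp (-(((A - Bc^2/C)/2)*t^2)) := by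
        funext t
        rw [← inner t]
        congr 1
        funext s
        rw [Real.norm_eq_abs, abs_of_pos (Real.exp_pos _)]
      rw [heq]
      exact (my_gauss_integrable hA22).const_mul _
  rw [Measure.volume_eq_prod, integral_prod _ hint]
  simp_rw [inner]
  rw [integral_const_mul]
  have : (fun t : ℝ => Real.exp (-(((A - Bc^2/C)/2)*t^2)))
      = fun t : ℝ => Real.exp (-(((A - Bc^2/C)/2)*t^2)) := rfl
  rw [show (∫ t : ℝ, Real.exp (-(((A - Bc^2/C)/2)*t^2)))
      = Real.sqrt (π/((A - Bc^2/C)/2)) * Real.exp (0^2/(4*((A - Bc^2/C)/2))) from ?_]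
  · rw [show (0:ℝ)^2/(4*((A - Bc^2/C)/2)) = 0 by norm_num, Real.exp_zero, mul_one,
      ← Real.sqrt_mul (by positivity),
      show π/(C/2) * (π/((A - Bc^2/C)/2)) = (2*π)^2/(A*C - Bc^2) by field_simp,
      Real.sqrt_div (by positivity) _, Real.sqrt_sq (by positivity)]
  · rw [← my_integral_quad (b := 0) hA22]
    congr 1
    funext t
    norm_num

lemma my_cos_formula {Ω : Type*} [MeasurableSpace Ω] {μ : Measure Ω} [IsProbabilityMeasure μ]
    {X Y : Ω → ℝ} (hX : Measurable X) (hY : Measurable Y)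
    {σi2 σj2 cij : ℝ}
    (hX2 : Integrable (fun ω => X ω^2) μ) (hY2 : Integrable (fun ω => Y ω^2) μ)
    (hXY : Integrable (fun ω => X ω * Y ω) μ)
    (hCi : ∫ ω, X ω^2 ∂μ = σi2) (hCj : ∫ ω, Y ω^2 ∂μ = σj2)
    (hCij : ∫ ω, X ω * Y ω ∂μ = cij)
    (c d : ℝ) (v : ℝ≥0)
    (hv : μ.map (fun ω => c * X ω + d * Y ω) = gaussianReal 0 v) :
    ∫ ω, Real.cos (c * X ω + d * Y ω) ∂μ
      = Real.exp (-(c^2*σi2 + 2*c*d*cij + d^2*σj2)/2) := by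
  have hZ : Measurable (fun ω => c * X ω + d * Y ω) :=
    ((hX.const_mul c).add (hY.const_mul d))
  have h1 : ∫ ω, Real.cos (c * X ω + d * Y ω) ∂μ
      = ∫ x, Real.cos x ∂(μ.map (fun ω => c * X ω + d * Y ω)) := by
    rw [integral_map hZ.aemeasurable Real.continuous_cos.aestronglyMeasurable]
  have h2 : ∫ x, Real.cos x ∂(gaussianReal 0 v) = Real.exp (-((v:ℝ))/2) := by
    have := my_cos_gaussianReal v 1
    simpa using this
  have h3 : (v:ℝ) = c^2*σi2 + 2*c*d*cij + d^2*σj2 := by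
    have e1 : ∫ x, x^2 ∂(μ.map (fun ω => c * X ω + d * Y ω))
        = ∫ ω, (c * X ω + d * Y ω)^2 ∂μ := by
      rw [integral_map hZ.aemeasurable (continuous_pow 2).aestronglyMeasurable]
    rw [hv, my_sq_gaussianReal] at e1
    rw [e1]
    have expand : (fun ω => (c * X ω + d * Y ω)^2)
        = fun ω => c^2 * (X ω^2) + ((2*c*d) * (X ω * Y ω) + d^2 * (Y ω^2)) := by
      funext ω; ring
    have i1 : Integrable (fun ω => c^2 * (X ω^2)) μ := hX2.const_mul _
    have i2 : Integrable (fun ω => (2*c*d) * (X ω * Y ω)) μ := hXY.const_mul _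
    have i3 : Integrable (fun ω => d^2 * (Y ω^2)) μ := hY2.const_mul _
    have i4 : Integrable (fun ω => (2*c*d) * (X ω * Y ω) + d^2 * (Y ω^2)) μ := i2.add i3
    rw [expand, integral_add i1 i4, integral_add i2 i3,
      integral_const_mul, integral_const_mul, integral_const_mul, hCi, hCj, hCij]
    ring
  rw [h1, hv, h2, h3]

set_option maxHeartbeats 1000000 in
theorem statement8
    {Ω : Type*} [MeasurableSpace Ω] (μ : Measure Ω) [IsProbabilityMeasure μ]
    (H₁ α : ℝ) (hH₁ : 0 < H₁) (hH₁' : H₁ < 1) (hα : 0 < α)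
    (B : ℝ → Ω → ℝ) (hB : IsFBM μ H₁ B)
    (τ : ℝ) (hτ : 0 < τ)
    (hτbound : ∀ r s : ℝ, 0 ≤ r → r ≤ s →
      τ * ((s - r) ^ (2 * H₁) * r ^ (2 * H₁)) ≤
        s ^ (2 * H₁) * r ^ (2 * H₁) - (RH H₁ s r) ^ 2) :
    ∀ n : ℕ, 1 ≤ n → ∀ i j : ℕ, 1 ≤ j → j < i →
      ∫ ω, K ((n : ℝ) ^ α * B i ω) * K ((n : ℝ) ^ α * B j ω) ∂μ ≤
        (n : ℝ) ^ (-(3 * α) / 2) /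
          (2 * Real.pi * Real.sqrt 2 * τ ^ ((1 : ℝ) / 4) *
            ((i : ℝ) - j) ^ (H₁ / 2) * (j : ℝ) ^ (3 * H₁ / 4) * (i : ℝ) ^ (H₁ / 4)) := by
  intro n hn i j hj hij
  have hnR : (1:ℝ) ≤ (n:ℝ) := by exact_mod_cast hn
  have hn0 : (0:ℝ) ≤ (n:ℝ) := by linarith
  have hnpos : (0:ℝ) < (n:ℝ) := by linarith
  have hi0 : (0:ℝ) ≤ (i:ℝ) := Nat.cast_nonneg i
  have hj0 : (0:ℝ) ≤ (j:ℝ) := Nat.cast_nonneg j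
  have hj1 : (1:ℝ) ≤ (j:ℝ) := by exact_mod_cast hj
  have hi1 : (1:ℝ) ≤ (i:ℝ) := by exact_mod_cast Nat.le_trans hj (Nat.le_of_lt hij)
  have hji : (j:ℝ) ≤ (i:ℝ) := by exact_mod_cast Nat.le_of_lt hij
  have hd0 : (0:ℝ) < (i:ℝ) - (j:ℝ) := by
    have : (j:ℝ) < (i:ℝ) := by exact_mod_cast hij
    linarith
  have h2π : (0:ℝ) < 2*π := by positivity
  set a : ℝ := (n:ℝ)^α with ha_def
  have ha : 0 < a := Real.rpow_pos_of_pos hnpos α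
  -- integrability of squares
  have sqInt : ∀ t : ℝ, 0 ≤ t → Integrable (fun ω => B t ω^2) μ := by
    intro t ht
    obtain ⟨v, hv⟩ := hB.gaussian 1 ![t] ![1] (fun k => by fin_cases k <;> simpa using ht)
    have he : (fun ω => ∑ k : Fin 1, (![1] : Fin 1 → ℝ) k * B ((![t] : Fin 1 → ℝ) k) ω)
        = B t := by
      funext ω; simp
    rw [he] at hv
    exact (integrable_map_measure (continuous_pow 2).aestronglyMeasurable
      (hB.meas t).aemeasurable).mp (by rw [hv]; exact my_integrable_sq_gaussianReal v)
  have hXm := hB.meas (i:ℝ)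
  have hYm := hB.meas (j:ℝ)
  have hX2 := sqInt (i:ℝ) hi0
  have hY2 := sqInt (j:ℝ) hj0
  have hXY : Integrable (fun ω => B (i:ℝ) ω * B (j:ℝ) ω) μ := by
    refine (((hX2.add hY2).div_const 2)).mono'
      (hXm.mul hYm).aestronglyMeasurable (Filter.Eventually.of_forall fun ω => ?_)
    simp only [Pi.add_apply]
    rw [Real.norm_eq_abs, abs_mul]
    nlinarith [sq_nonneg (|B (i:ℝ) ω| - |B (j:ℝ) ω|), _root_.sq_abs (B (i:ℝ) ω), _root_.sq_abs (B (j:ℝ) ω),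
      abs_nonneg (B (i:ℝ) ω), abs_nonneg (B (j:ℝ) ω)]
  -- covariance values
  have hCi : ∫ ω, (B (i:ℝ) ω)^2 ∂μ = (i:ℝ)^(2*H₁) := by
    have h := hB.cov (i:ℝ) (i:ℝ) hi0 hi0
    have e : (fun ω => B (i:ℝ) ω * B (i:ℝ) ω) = fun ω => (B (i:ℝ) ω)^2 := by funext ω; ring
    rw [e] at h
    rw [h, RH, sub_self, abs_zero, Real.zero_rpow (by positivity : 2*H₁ ≠ 0)]
    ring
  have hCj : ∫ ω, (B (j:ℝ) ω)^2 ∂μ = (j:ℝ)^(2*H₁) := by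
    have h := hB.cov (j:ℝ) (j:ℝ) hj0 hj0
    have e : (fun ω => B (j:ℝ) ω * B (j:ℝ) ω) = fun ω => (B (j:ℝ) ω)^2 := by funext ω; ring
    rw [e] at h
    rw [h, RH, sub_self, abs_zero, Real.zero_rpow (by positivity : 2*H₁ ≠ 0)]
    ring
  have hCij : ∫ ω, B (i:ℝ) ω * B (j:ℝ) ω ∂μ = RH H₁ (i:ℝ) (j:ℝ) := hB.cov _ _ hi0 hj0
  -- the key characteristic-function style formula
  have key : ∀ c d : ℝ, ∫ ω, Real.cos (c * B (i:ℝ) ω + d * B (j:ℝ) ω) ∂μ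
      = Real.exp (-(c^2*((i:ℝ)^(2*H₁)) + 2*c*d*(RH H₁ (i:ℝ) (j:ℝ)) + d^2*((j:ℝ)^(2*H₁)))/2) := by
    intro c d
    obtain ⟨v, hv⟩ := hB.gaussian 2 ![(i:ℝ),(j:ℝ)] ![c,d]
      (fun k => by fin_cases k <;> simpa using ⟨hi0, hj0⟩)
    have he : (fun ω => ∑ k : Fin 2, (![c,d] : Fin 2 → ℝ) k * B ((![(i:ℝ),(j:ℝ)] : Fin 2 → ℝ) k) ω)
        = fun ω => c * B (i:ℝ) ω + d * B (j:ℝ) ω := by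
      funext ω; rw [Fin.sum_univ_two]; simp
    rw [he] at hv
    exact my_cos_formula hXm hYm hX2 hY2 hXY hCi hCj hCij c d v hv
  -- pointwise kernel representation
  have hs : (Real.sqrt (2*π))⁻¹ * (Real.sqrt (2*π))⁻¹ = (2*π)⁻¹ := by
    rw [← mul_inv, Real.mul_self_sqrt h2π.le]
  have hK : ∀ ω, K (a * B (i:ℝ) ω) * K (a * B (j:ℝ) ω)
      = (2*π)⁻¹ * ((2*π)⁻¹ * ∫ p : ℝ×ℝ, Real.exp (-((1:ℝ)/2*p.1^2)) * Real.exp (-((1:ℝ)/2*p.2^2))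
          * Real.cos (p.1*(a * B (i:ℝ) ω) + p.2*(a * B (j:ℝ) ω))) := by
    intro ω
    rw [my_prod_repr, K, K, inv_mul_cancel_left₀ (ne_of_gt h2π),
      show -((a * B (i:ℝ) ω)^2)/2 = -((1:ℝ)/2*(a * B (i:ℝ) ω)^2) by ring,
      show -((a * B (j:ℝ) ω)^2)/2 = -((1:ℝ)/2*(a * B (j:ℝ) ω)^2) by ring, ← hs]
    ring
  -- product integrability for Fubini
  have hGmeas : AEStronglyMeasurable
      (fun q : Ω × (ℝ×ℝ) =>
        Real.exp (-((1:ℝ)/2*q.2.1^2)) * Real.exp (-((1:ℝ)/2*q.2.2^2))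
          * Real.cos (q.2.1*(a * B (i:ℝ) q.1) + q.2.2*(a * B (j:ℝ) q.1)))
      (μ.prod (volume : Measure (ℝ×ℝ))) := by
    apply Measurable.aestronglyMeasurable
    refine Measurable.mul (Measurable.mul ?_ ?_) ?_
    · exact Real.measurable_exp.comp (((measurable_snd.fst.pow_const 2).const_mul _).neg)
    · exact Real.measurable_exp.comp (((measurable_snd.snd.pow_const 2).const_mul _).neg)
    · exact Real.measurable_cos.comp
        ((measurable_snd.fst.mul ((hXm.comp measurable_fst).const_mul a)).add
          (measurable_snd.snd.mul ((hYm.comp measurable_fst).const_mul a)))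
  have hg0int : Integrable (fun p : ℝ×ℝ =>
      Real.exp (-((1:ℝ)/2*p.1^2)) * Real.exp (-((1:ℝ)/2*p.2^2))) (volume : Measure (ℝ×ℝ)) :=
    (my_prod_integrable 0 0).congr (Filter.Eventually.of_forall fun p => by simp)
  have hGint : Integrable
      (fun q : Ω × (ℝ×ℝ) =>
        Real.exp (-((1:ℝ)/2*q.2.1^2)) * Real.exp (-((1:ℝ)/2*q.2.2^2))
          * Real.cos (q.2.1*(a * B (i:ℝ) q.1) + q.2.2*(a * B (j:ℝ) q.1)))
      (μ.prod (volume : Measure (ℝ×ℝ))) := by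
    rw [integrable_prod_iff hGmeas]
    constructor
    · refine Filter.Eventually.of_forall fun ω => ?_
      exact my_prod_integrable (a * B (i:ℝ) ω) (a * B (j:ℝ) ω)
    · refine (integrable_const (2*π)).mono' hGmeas.norm.integral_prod_right'
        (Filter.Eventually.of_forall fun ω => ?_)
      rw [Real.norm_eq_abs, _root_.abs_of_nonneg (integral_nonneg fun p => norm_nonneg _)]
      have hb : ∀ p : ℝ×ℝ,
          ‖Real.exp (-((1:ℝ)/2*p.1^2)) * Real.exp (-((1:ℝ)/2*p.2^2))
            * Real.cos (p.1*(a * B (i:ℝ) ω) + p.2*(a * B (j:ℝ) ω))‖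
          ≤ Real.exp (-((1:ℝ)/2*p.1^2)) * Real.exp (-((1:ℝ)/2*p.2^2)) := by
        intro p
        rw [Real.norm_eq_abs, abs_mul, abs_of_pos (mul_pos (Real.exp_pos _) (Real.exp_pos _))]
        exact mul_le_of_le_one_right (mul_pos (Real.exp_pos _) (Real.exp_pos _)).le
          (abs_cos_le_one _)
      calc ∫ p : ℝ×ℝ, ‖Real.exp (-((1:ℝ)/2*p.1^2)) * Real.exp (-((1:ℝ)/2*p.2^2))
            * Real.cos (p.1*(a * B (i:ℝ) ω) + p.2*(a * B (j:ℝ) ω))‖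
          ≤ ∫ p : ℝ×ℝ, Real.exp (-((1:ℝ)/2*p.1^2)) * Real.exp (-((1:ℝ)/2*p.2^2)) :=
            integral_mono (my_prod_integrable (a * B (i:ℝ) ω) (a * B (j:ℝ) ω)).norm hg0int hb
        _ = 2*π := by
            have h00 := my_prod_repr 0 0
            simpa using h00
  have hswap := integral_integral_swap
    (f := fun ω (p : ℝ×ℝ) =>
      Real.exp (-((1:ℝ)/2*p.1^2)) * Real.exp (-((1:ℝ)/2*p.2^2))
        * Real.cos (p.1*(a * B (i:ℝ) ω) + p.2*(a * B (j:ℝ) ω))) hGint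
  -- inner integral over Ω
  have hinner : ∀ p : ℝ×ℝ,
      (∫ ω, Real.exp (-((1:ℝ)/2*p.1^2)) * Real.exp (-((1:ℝ)/2*p.2^2))
        * Real.cos (p.1*(a * B (i:ℝ) ω) + p.2*(a * B (j:ℝ) ω)) ∂μ)
      = Real.exp (-(((1 + a^2*((i:ℝ)^(2*H₁)))*p.1^2
          + 2*(a^2*(RH H₁ (i:ℝ) (j:ℝ)))*p.1*p.2 + (1 + a^2*((j:ℝ)^(2*H₁)))*p.2^2)/2)) := by
    intro p
    have e1 : (fun ω => Real.exp (-((1:ℝ)/2*p.1^2)) * Real.exp (-((1:ℝ)/2*p.2^2))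
        * Real.cos (p.1*(a * B (i:ℝ) ω) + p.2*(a * B (j:ℝ) ω)))
        = fun ω => (Real.exp (-((1:ℝ)/2*p.1^2)) * Real.exp (-((1:ℝ)/2*p.2^2)))
          * Real.cos ((p.1*a) * B (i:ℝ) ω + (p.2*a) * B (j:ℝ) ω) := by
      funext ω
      rw [show p.1*(a * B (i:ℝ) ω) + p.2*(a * B (j:ℝ) ω)
        = (p.1*a) * B (i:ℝ) ω + (p.2*a) * B (j:ℝ) ω by ring]
    rw [e1, integral_const_mul, key (p.1*a) (p.2*a), ← Real.exp_add, ← Real.exp_add]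
    congr 1
    ring
  -- main computation
  have main : ∫ ω, K (a * B (i:ℝ) ω) * K (a * B (j:ℝ) ω) ∂μ
      = (2*π)⁻¹ * ((2*π)⁻¹ *
          (2*π / Real.sqrt ((1 + a^2*((i:ℝ)^(2*H₁))) * (1 + a^2*((j:ℝ)^(2*H₁)))
            - (a^2*(RH H₁ (i:ℝ) (j:ℝ)))^2))) := by
    have hC0 : 0 < 1 + a^2*((j:ℝ)^(2*H₁)) := by
      have : 0 ≤ (j:ℝ)^(2*H₁) := Real.rpow_nonneg hj0 _
      nlinarith [sq_nonneg a]
    have hdetpos : 0 < (i:ℝ)^(2*H₁) * ((j:ℝ)^(2*H₁)) - (RH H₁ (i:ℝ) (j:ℝ))^2 := by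
      have hb := hτbound (j:ℝ) (i:ℝ) hj0 hji
      have : 0 < τ * (((i:ℝ)-(j:ℝ))^(2*H₁) * ((j:ℝ))^(2*H₁)) := by
        have h1 : 0 < ((i:ℝ)-(j:ℝ))^(2*H₁) := Real.rpow_pos_of_pos hd0 _
        have h2 : 0 < ((j:ℝ))^(2*H₁) := Real.rpow_pos_of_pos (by linarith) _
        positivity
      linarith
    have hD0 : 0 < (1 + a^2*((i:ℝ)^(2*H₁))) * (1 + a^2*((j:ℝ)^(2*H₁)))
        - (a^2*(RH H₁ (i:ℝ) (j:ℝ)))^2 := by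
      have h1 : 0 ≤ (i:ℝ)^(2*H₁) := Real.rpow_nonneg hi0 _
      have h2 : 0 ≤ (j:ℝ)^(2*H₁) := Real.rpow_nonneg hj0 _
      nlinarith [sq_nonneg a, sq_nonneg (a^2), mul_nonneg (sq_nonneg (a^2)) hdetpos.le]
    calc ∫ ω, K (a * B (i:ℝ) ω) * K (a * B (j:ℝ) ω) ∂μ
        = ∫ ω, (2*π)⁻¹ * ((2*π)⁻¹ * ∫ p : ℝ×ℝ,
            Real.exp (-((1:ℝ)/2*p.1^2)) * Real.exp (-((1:ℝ)/2*p.2^2))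
            * Real.cos (p.1*(a * B (i:ℝ) ω) + p.2*(a * B (j:ℝ) ω))) ∂μ :=
          integral_congr_ae (Filter.Eventually.of_forall hK)
      _ = (2*π)⁻¹ * ((2*π)⁻¹ * ∫ ω, (∫ p : ℝ×ℝ,
            Real.exp (-((1:ℝ)/2*p.1^2)) * Real.exp (-((1:ℝ)/2*p.2^2))
            * Real.cos (p.1*(a * B (i:ℝ) ω) + p.2*(a * B (j:ℝ) ω))) ∂μ) := by
          rw [integral_const_mul, integral_const_mul]
      _ = (2*π)⁻¹ * ((2*π)⁻¹ * ∫ p : ℝ×ℝ, (∫ ω,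
            Real.exp (-((1:ℝ)/2*p.1^2)) * Real.exp (-((1:ℝ)/2*p.2^2))
            * Real.cos (p.1*(a * B (i:ℝ) ω) + p.2*(a * B (j:ℝ) ω)) ∂μ)) := by
          rw [hswap]
      _ = (2*π)⁻¹ * ((2*π)⁻¹ * ∫ p : ℝ×ℝ,
            Real.exp (-(((1 + a^2*((i:ℝ)^(2*H₁)))*p.1^2
              + 2*(a^2*(RH H₁ (i:ℝ) (j:ℝ)))*p.1*p.2 + (1 + a^2*((j:ℝ)^(2*H₁)))*p.2^2)/2))) := by
          congr 1
          congr 1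
          exact integral_congr_ae (Filter.Eventually.of_forall hinner)
      _ = (2*π)⁻¹ * ((2*π)⁻¹ *
            (2*π / Real.sqrt ((1 + a^2*((i:ℝ)^(2*H₁))) * (1 + a^2*((j:ℝ)^(2*H₁)))
              - (a^2*(RH H₁ (i:ℝ) (j:ℝ)))^2))) := by
          rw [my_gauss2 hC0 hD0]
  rw [main]
  -- final algebraic estimate
  have hp : ∀ (x r : ℝ), 0 ≤ x → ∀ k : ℕ, x ^ (r * (k:ℝ)) = (x ^ r) ^ k := by
    intro x r hx k
    rw [Real.rpow_mul hx, Real.rpow_natCast]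
  have hca : a = ((n:ℝ)^(α/2))^2 := by
    rw [ha_def, ← hp _ _ hn0 2, show (α/2)*((2:ℕ):ℝ) = α by push_cast; ring]
  have hCi8 : (i:ℝ)^(2*H₁) = ((i:ℝ)^(H₁/4))^8 := by
    rw [← hp _ _ hi0 8, show (H₁/4)*((8:ℕ):ℝ) = 2*H₁ by push_cast; ring]
  have hCj8 : (j:ℝ)^(2*H₁) = ((j:ℝ)^(H₁/4))^8 := by
    rw [← hp _ _ hj0 8, show (H₁/4)*((8:ℕ):ℝ) = 2*H₁ by push_cast; ring]
  have hqd8 : ((i:ℝ)-(j:ℝ))^(2*H₁) = (((i:ℝ)-(j:ℝ))^(H₁/4))^8 := by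
    rw [← hp _ _ hd0.le 8, show (H₁/4)*((8:ℕ):ℝ) = 2*H₁ by push_cast; ring]
  have hτ4 : τ = (τ^((1:ℝ)/4))^4 := by
    rw [← hp _ _ hτ.le 4, show ((1:ℝ)/4)*((4:ℕ):ℝ) = 1 by push_cast; ring, Real.rpow_one]
  have hn3 : (n:ℝ)^(-(3*α)/2) = (((n:ℝ)^(α/2))^3)⁻¹ := by
    rw [← hp _ _ hn0 3, ← Real.rpow_neg hn0,
      show -((α/2)*((3:ℕ):ℝ)) = -(3*α)/2 by push_cast; ring]
  have hqd2 : ((i:ℝ)-(j:ℝ))^(H₁/2) = (((i:ℝ)-(j:ℝ))^(H₁/4))^2 := by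
    rw [← hp _ _ hd0.le 2, show (H₁/4)*((2:ℕ):ℝ) = H₁/2 by push_cast; ring]
  have hqj3 : (j:ℝ)^(3*H₁/4) = ((j:ℝ)^(H₁/4))^3 := by
    rw [← hp _ _ hj0 3, show (H₁/4)*((3:ℕ):ℝ) = 3*H₁/4 by push_cast; ring]
  have hdet := hτbound (j:ℝ) (i:ℝ) hj0 hji
  rw [hqd8, hCi8, hCj8, hτ4] at hdet
  rw [hca, hCi8, hCj8, hn3, hqd2, hqj3]
  set u := (n:ℝ)^(α/2) with hu
  set w := τ^((1:ℝ)/4) with hw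
  set qd := ((i:ℝ)-(j:ℝ))^(H₁/4) with hqd
  set qj := (j:ℝ)^(H₁/4) with hqj
  set qi := (i:ℝ)^(H₁/4) with hqi
  set R := RH H₁ (i:ℝ) (j:ℝ) with hR
  have hu0 : 0 < u := by rw [hu]; exact Real.rpow_pos_of_pos hnpos _
  have hw0 : 0 < w := by rw [hw]; exact Real.rpow_pos_of_pos hτ _
  have hqd0 : 0 < qd := by rw [hqd]; exact Real.rpow_pos_of_pos hd0 _
  have hqj0 : 0 < qj := by rw [hqj]; exact Real.rpow_pos_of_pos (by linarith) _
  have hqi0 : 0 < qi := by rw [hqi]; exact Real.rpow_pos_of_pos (by linarith) _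
  have hq : qj ≤ qi := by
    rw [hqj, hqi]
    exact Real.rpow_le_rpow hj0 hji (div_nonneg hH₁.le (by norm_num))
  have hs2 : (Real.sqrt 2)^2 = 2 := Real.sq_sqrt (by norm_num)
  have hs20 : 0 < Real.sqrt 2 := Real.sqrt_pos.mpr (by norm_num)
  have hqij : qj^2 ≤ qi^2 := pow_le_pow_left₀ hqj0.le hq 2
  have key1 : 2*(u^6*(w^2*(qd^4*(qj^4*qi^4)))) ≤ u^4*qi^8 + u^8*(w^4*(qd^8*qj^8)) := by
    calc 2*(u^6*(w^2*(qd^4*(qj^4*qi^4))))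
        = 2*(u^2*qi^4)*(u^4*(w^2*(qd^4*qj^4))) := by ring
      _ ≤ (u^2*qi^4)^2 + (u^4*(w^2*(qd^4*qj^4)))^2 := two_mul_le_add_sq _ _
      _ = u^4*qi^8 + u^8*(w^4*(qd^8*qj^8)) := by ring
  have key2 : 2*(u^6*(w^2*(qd^4*(qj^6*qi^2)))) ≤ 2*(u^6*(w^2*(qd^4*(qj^4*qi^4)))) := by
    have h1 : (qj^4*qi^2)*qj^2 ≤ (qj^4*qi^2)*qi^2 :=
      mul_le_mul_of_nonneg_left hqij (by positivity)
    calc 2*(u^6*(w^2*(qd^4*(qj^6*qi^2))))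
        = 2*(u^6*(w^2*qd^4))*((qj^4*qi^2)*qj^2) := by ring
      _ ≤ 2*(u^6*(w^2*qd^4))*((qj^4*qi^2)*qi^2) :=
          mul_le_mul_of_nonneg_left h1 (by positivity)
      _ = 2*(u^6*(w^2*(qd^4*(qj^4*qi^4)))) := by ring
  have t3 : u^8*(w^4*(qd^8*qj^8)) ≤ u^8*(qi^8*qj^8 - R^2) :=
    mul_le_mul_of_nonneg_left hdet (pow_nonneg hu0.le 8)
  have hDE : (Real.sqrt 2 * (u^3*(w*(qd^2*(qj^3*qi)))))^2
      ≤ (1 + (u^2)^2*qi^8) * (1 + (u^2)^2*qj^8) - ((u^2)^2*R)^2 := by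
    calc (Real.sqrt 2 * (u^3*(w*(qd^2*(qj^3*qi)))))^2
        = (Real.sqrt 2)^2 * (u^3*(w*(qd^2*(qj^3*qi))))^2 := by ring
      _ = 2*(u^6*(w^2*(qd^4*(qj^6*qi^2)))) := by rw [hs2]; ring
      _ ≤ 2*(u^6*(w^2*(qd^4*(qj^4*qi^4)))) := key2
      _ ≤ u^4*qi^8 + u^8*(w^4*(qd^8*qj^8)) := key1
      _ ≤ u^4*qi^8 + u^8*(qi^8*qj^8 - R^2) := by linarith
      _ ≤ (1 + (u^2)^2*qi^8) * (1 + (u^2)^2*qj^8) - ((u^2)^2*R)^2 := by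
          rw [show (1 + (u^2)^2*qi^8) * (1 + (u^2)^2*qj^8) - ((u^2)^2*R)^2
            = (1 + u^4*qj^8) + (u^4*qi^8 + u^8*(qi^8*qj^8 - R^2)) by ring]
          exact le_add_of_nonneg_left (by positivity)
  have hE0 : 0 < Real.sqrt 2 * (u^3*(w*(qd^2*(qj^3*qi)))) := by positivity
  have hD0 : 0 < (1 + (u^2)^2*qi^8) * (1 + (u^2)^2*qj^8) - ((u^2)^2*R)^2 :=
    lt_of_lt_of_le (pow_pos hE0 2) hDE
  have hsqrtD : Real.sqrt 2 * (u^3*(w*(qd^2*(qj^3*qi))))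
      ≤ Real.sqrt ((1 + (u^2)^2*qi^8) * (1 + (u^2)^2*qj^8) - ((u^2)^2*R)^2) := by
    have h1 := Real.sqrt_le_sqrt hDE
    rwa [Real.sqrt_sq hE0.le] at h1
  have hsD0 : 0 < Real.sqrt ((1 + (u^2)^2*qi^8) * (1 + (u^2)^2*qj^8) - ((u^2)^2*R)^2) :=
    lt_of_lt_of_le hE0 hsqrtD
  have hLHS : (2*π)⁻¹ * ((2*π)⁻¹ *
      (2*π / Real.sqrt ((1 + (u^2)^2*qi^8) * (1 + (u^2)^2*qj^8) - ((u^2)^2*R)^2)))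
      = 1/(2*π * Real.sqrt ((1 + (u^2)^2*qi^8) * (1 + (u^2)^2*qj^8) - ((u^2)^2*R)^2)) := by
    field_simp
  rw [hLHS]
  calc 1/(2*π * Real.sqrt ((1 + (u^2)^2*qi^8) * (1 + (u^2)^2*qj^8) - ((u^2)^2*R)^2))
      ≤ 1/(2*π * (Real.sqrt 2 * (u^3*(w*(qd^2*(qj^3*qi)))))) := by
        refine one_div_le_one_div_of_le (by positivity) ?_
        exact mul_le_mul_of_nonneg_left hsqrtD h2π.le
    _ = (u^3)⁻¹ / (2*π*Real.sqrt 2*w*qd^2*qj^3*qi) := by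
        field_simp
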